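/- A topological algebra 𝐀 = (A, E) of type Ω is profinite if and only if A is a Stone space and the translation monoid M(𝐀) is relatively compact in C(A, A) with the compact-open topology. -/

import Mathlib

/-- A translation of the `Ω`-algebra `(A, E)`. -/
def IsTranslation {Ω : ℕ → Type} {A : Type} (E : ∀ n, Ω n → (Fin n → A) → A)
    (g : A → A) : Prop :=
  ∃ (n : ℕ) (ω : Ω n) (i : Fin n) (a : Fin n → A),
    g = fun x => E n ω (Function.update a i x)

/-- Membership in the translation monoid `M(𝐀)`. -/
inductive InTransMonoid {Ω : ℕ → Type} {A : Type} (E : ∀ n, Ω n → (Fin n → A) → A) :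
    (A → A) → Prop
  | id : InTransMonoid E (fun x => x)
  | comp {g f : A → A} : IsTranslation E g → InTransMonoid E f → InTransMonoid E (g ∘ f)

/-- A continuous homomorphism from the topological `Ω`-algebra `(A, E)` onto a finite
discrete topological `Ω`-algebra. -/
structure FinQuot (Ω : ℕ → Type) [∀ n, TopologicalSpace (Ω n)]
    (A : Type) [TopologicalSpace A] (E : ∀ n, Ω n → (Fin n → A) → A) where
  B : Type
  [tB : TopologicalSpace B]
  [finB : Finite B]
  [discB : DiscreteTopology B]
  op : ∀ n, Ω n → (Fin n → B) → B
  contOp : ∀ n, Continuous fun p : Ω n × (Fin n → B) => op n p.1 p.2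
  toFun : A → B
  cont : Continuous toFun
  hom : ∀ (n : ℕ) (ω : Ω n) (a : Fin n → A), toFun (E n ω a) = op n ω fun i => toFun (a i)

/-- A topological `Ω`-algebra is profinite if it is compact and residually finite. -/
def IsProfinite (Ω : ℕ → Type) [∀ n, TopologicalSpace (Ω n)]
    (A : Type) [TopologicalSpace A] (E : ∀ n, Ω n → (Fin n → A) → A) : Prop :=
  CompactSpace A ∧ ∀ x y : A, x ≠ y → ∃ q : FinQuot Ω A E, q.toFun x ≠ q.toFun y

section Aux

open Set Topology Filter Uniformity

variable {Ω : ℕ → Type} {A : Type} [∀ n, TopologicalSpace (Ω n)] [TopologicalSpace A]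
  {E : ∀ n, Ω n → (Fin n → A) → A}

lemma IsTranslation.continuous' (hE : ∀ n, Continuous fun p : Ω n × (Fin n → A) => E n p.1 p.2)
    {g : A → A} (hg : IsTranslation E g) : Continuous g := by
  obtain ⟨n, ω, i, a, rfl⟩ := hg
  have h1 : Continuous fun x : A => ((ω, Function.update a i x) : Ω n × (Fin n → A)) := by
    refine continuous_const.prodMk (continuous_pi fun j => ?_)
    rcases eq_or_ne j i with rfl | hj
    · simpa [Function.update_self] using continuous_id'
    · simpa [Function.update_of_ne hj] using continuous_const
  exact (hE n).comp h1

lemma InTransMonoid.continuous' (hE : ∀ n, Continuous fun p : Ω n × (Fin n → A) => E n p.1 p.2)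
    {f : A → A} (hf : InTransMonoid E f) : Continuous f := by
  induction hf with
  | id => exact continuous_id
  | comp hg _ ih => exact (hg.continuous' hE).comp ih

lemma InTransMonoid.comp' {f f' : A → A} (hf : InTransMonoid E f)
    (hf' : InTransMonoid E f') : InTransMonoid E (f ∘ f') := by
  induction hf with
  | id => exact hf'
  | @comp g f'' hg _ ih =>
    show InTransMonoid E (g ∘ (f'' ∘ f'))
    exact InTransMonoid.comp hg ih

lemma InTransMonoid.comp_translation {f g : A → A} (hf : InTransMonoid E f)
    (hg : IsTranslation E g) : InTransMonoid E (f ∘ g) :=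
  hf.comp' (InTransMonoid.comp hg InTransMonoid.id)

lemma InTransMonoid.quot_compat (q : FinQuot Ω A E) {f : A → A} (hf : InTransMonoid E f) :
    ∀ a b : A, q.toFun a = q.toFun b → q.toFun (f a) = q.toFun (f b) := by
  induction hf with
  | id => exact fun a b h => h
  | comp hg _ ih =>
    intro a b h
    obtain ⟨n, ω, i, v, rfl⟩ := hg
    have hab := ih a b h
    show q.toFun (E n ω _) = q.toFun (E n ω _)
    rw [q.hom, q.hom]
    congr 1
    funext j
    rcases eq_or_ne j i with rfl | hj
    · simpa [Function.update_self] using hab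
    · simp [Function.update_of_ne hj]

lemma continuous_of_discrete_snd {X D Y : Type} [TopologicalSpace X] [TopologicalSpace D]
    [DiscreteTopology D] [TopologicalSpace Y] {f : X × D → Y}
    (h : ∀ d, Continuous fun x => f (x, d)) : Continuous f := by
  rw [continuous_iff_continuousAt]
  rintro ⟨x, d⟩
  have hd : 𝓝 d = pure d := by rw [nhds_discrete]
  unfold ContinuousAt
  rw [nhds_prod_eq, hd, Filter.prod_pure, Filter.tendsto_map'_iff]
  exact (h d).tendsto x

end Aux

open Set Topology Filter Uniformity

/-- A topological `Ω`-algebra `𝐀 = (A, E)` is profinite iff `A` is a Stone space and the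
translation monoid `M(𝐀)` is relatively compact in `C(A, A)` with the compact-open
topology. -/
theorem statement7 (Ω : ℕ → Type) [∀ n, TopologicalSpace (Ω n)]
    (A : Type) [TopologicalSpace A] (E : ∀ n, Ω n → (Fin n → A) → A)
    (hE : ∀ n, Continuous fun p : Ω n × (Fin n → A) => E n p.1 p.2) :
    IsProfinite Ω A E ↔
      (CompactSpace A ∧ T2Space A ∧ TotallyDisconnectedSpace A ∧
        ∃ K : Set C(A, A), IsCompact K ∧
          ∀ f : A → A, InTransMonoid E f → ∃ g ∈ K, ⇑g = f) := by
  constructor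
  · rintro ⟨hA, hsep⟩
    haveI := hA
    -- Total separation from residual finiteness
    haveI htots : TotallySeparatedSpace A := by
      rw [totallySeparatedSpace_iff_exists_isClopen]
      intro x y hxy
      obtain ⟨q, hq⟩ := hsep x y hxy
      letI := q.tB; haveI := q.discB
      refine ⟨q.toFun ⁻¹' {q.toFun x}, ?_, rfl, fun h => hq h.symm⟩
      exact (isClopen_discrete _).preimage q.cont
    haveI : T2Space A := inferInstance
    refine ⟨hA, inferInstance, inferInstance, ?_⟩
    letI : UniformSpace A := uniformSpaceOfCompactR1
    -- key: every entourage contains the intersection of finitely many congruence kernels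
    have key : ∀ V ∈ 𝓤 A, ∃ t : Finset (FinQuot Ω A E),
        ∀ a b : A, (∀ q ∈ t, q.toFun a = q.toFun b) → (a, b) ∈ V := by
      intro V hV
      rw [← nhdsSet_diagonal_eq_uniformity] at hV
      obtain ⟨W, hWo, hdW, hWV⟩ := mem_nhdsSet_iff_exists.mp hV
      have hopen : ∀ q : FinQuot Ω A E, IsOpen {z : A × A | q.toFun z.1 ≠ q.toFun z.2} := by
        intro q
        letI := q.tB; haveI := q.discB
        have hc : Continuous fun z : A × A => ((q.toFun z.1, q.toFun z.2) : q.B × q.B) :=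
          (q.cont.comp continuous_fst).prodMk (q.cont.comp continuous_snd)
        exact isClosed_diagonal.isOpen_compl.preimage hc
      have hcov : Wᶜ ⊆ ⋃ q : FinQuot Ω A E, {z : A × A | q.toFun z.1 ≠ q.toFun z.2} := by
        rintro ⟨a, b⟩ hz
        have hne : a ≠ b := by
          rintro rfl
          exact hz (hdW rfl)
        obtain ⟨q, hq⟩ := hsep a b hne
        exact mem_iUnion.mpr ⟨q, hq⟩
      have hWc : IsCompact (Wᶜ) := hWo.isClosed_compl.isCompact
      obtain ⟨t, ht⟩ := hWc.elim_finite_subcover _ hopen hcov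
      refine ⟨t, fun a b hab => ?_⟩
      by_contra hV'
      have hmem : (a, b) ∈ Wᶜ := fun h => hV' (hWV h)
      obtain ⟨q, hqt, hq⟩ := by simpa using ht hmem
      exact hq (hab q hqt)
    -- the set of functions compatible with all finite quotients
    set T : Set (A → A) :=
      {f | ∀ q : FinQuot Ω A E, ∀ a b : A, q.toFun a = q.toFun b →
        q.toFun (f a) = q.toFun (f b)} with hT
    have Teq : T.Equicontinuous := by
      intro x V hV
      obtain ⟨t, ht⟩ := key V hV
      have hN : (⋂ q ∈ t, q.toFun ⁻¹' {q.toFun x}) ∈ 𝓝 x := by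
        refine (Filter.biInter_mem t.finite_toSet).mpr fun q hq => ?_
        letI := q.tB; haveI := q.discB
        exact ((isOpen_discrete _).preimage q.cont).mem_nhds rfl
      refine Filter.mem_of_superset hN fun y hy => ?_
      rintro ⟨f, hf⟩
      refine ht _ _ fun q hq => ?_
      have hxy : q.toFun x = q.toFun y := by
        have := Set.mem_iInter₂.mp hy q hq
        simpa using this.symm
      exact hf q x y hxy
    have Tcont : ∀ f ∈ T, Continuous f := fun f hf => Teq.continuous_of_mem hf
    have Tcl : IsClosed T := by
      have : T = ⋂ (q : FinQuot Ω A E), ⋂ (a : A), ⋂ (b : A),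
          {f : A → A | q.toFun a = q.toFun b → q.toFun (f a) = q.toFun (f b)} := by
        ext f; simp [hT, Set.mem_iInter]
      rw [this]
      refine isClosed_iInter fun q => isClosed_iInter fun a => isClosed_iInter fun b => ?_
      letI := q.tB; haveI := q.discB; haveI : T2Space q.B := inferInstance
      by_cases h : q.toFun a = q.toFun b
      · simp only [h, forall_const]
        exact isClosed_eq (q.cont.comp (continuous_apply a)) (q.cont.comp (continuous_apply b))
      · convert isClosed_univ using 1
        ext f; simp [h]
    have Tcpt : IsCompact T := Tcl.isCompact
    set S : Set C(A, A) := {g | ⇑g ∈ T} with hS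
    have himg : ContinuousMap.toFun '' S = T := by
      ext f
      constructor
      · rintro ⟨g, hg, rfl⟩; exact hg
      · intro hf; exact ⟨⟨f, Tcont f hf⟩, hf, rfl⟩
    have hScpt : IsCompact S := by
      refine ArzelaAscoli.isCompact_of_equicontinuous S (by rw [himg]; exact Tcpt) ?_
      exact Teq.comp fun g : S => (⟨⇑g.1, g.2⟩ : T)
    refine ⟨S, hScpt, fun f hf => ?_⟩
    have hfT : f ∈ T := fun q a b h => hf.quot_compat q a b h
    exact ⟨⟨f, Tcont f hfT⟩, hfT, rfl⟩
  · rintro ⟨hA, hT2, hTD, K, hK, hKM⟩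
    haveI := hA; haveI := hT2; haveI := hTD
    haveI : TotallySeparatedSpace A := loc_compact_t2_tot_disc_iff_tot_sep.mp hTD
    refine ⟨hA, fun x y hxy => ?_⟩
    obtain ⟨C, hCcl, hxC, hyC⟩ := exists_isClopen_of_totally_separated hxy
    letI : UniformSpace A := uniformSpaceOfCompactR1
    classical
    -- the translation monoid, bundled, and its closure
    set M' : Set C(A, A) := {g | InTransMonoid E ⇑g} with hM'
    have hM'K : M' ⊆ K := by
      intro g hg
      obtain ⟨g', hg'K, hg'⟩ := hKM ⇑g hg
      rwa [show g' = g from ContinuousMap.coe_injective hg'] at hg'K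
    set K' : Set C(A, A) := closure M' with hK'
    have hK'cpt : IsCompact K' :=
      IsCompact.of_isClosed_subset hK isClosed_closure (closure_minimal hM'K hK.isClosed)
    have hid : (ContinuousMap.id A) ∈ K' := subset_closure InTransMonoid.id
    -- K' is stable under right composition with translations
    have hstab : ∀ t : C(A, A), InTransMonoid E ⇑t → ∀ g ∈ K', g.comp t ∈ K' := by
      intro t ht g hg
      have hcont : Continuous fun g : C(A, A) => g.comp t := ContinuousMap.continuous_precomp t
      have h1 : (fun g : C(A, A) => g.comp t) '' M' ⊆ M' := by
        rintro _ ⟨g', hg', rfl⟩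
        show InTransMonoid E (⇑g' ∘ ⇑t)
        exact hg'.comp' ht
      have h2 : (fun g : C(A, A) => g.comp t) '' closure M' ⊆
          closure ((fun g : C(A, A) => g.comp t) '' M') :=
        image_closure_subset_closure_image hcont
      exact closure_mono h1 (h2 ⟨g, hg, rfl⟩)
    -- the syntactic congruence relative to C and K'
    set r : A → A → Prop := fun a b => ∀ g ∈ K', ((g : C(A, A)) a ∈ C ↔ (g : C(A, A)) b ∈ C)
      with hr
    have hrrefl : ∀ a, r a a := fun a g _ => Iff.rfl
    have hrsymm : ∀ {a b}, r a b → r b a := fun h g hg => (h g hg).symm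
    have hrtrans : ∀ {a b c}, r a b → r b c → r a c := fun h1 h2 g hg =>
      (h1 g hg).trans (h2 g hg)
    letI sr : Setoid A := ⟨r, fun a => hrrefl a, fun h => hrsymm h, fun h1 h2 => hrtrans h1 h2⟩
    -- total boundedness gives a finite "net"
    have hVC : ((C ×ˢ C) ∪ (Cᶜ ×ˢ Cᶜ) : Set (A × A)) ∈ 𝓤 A := by
      rw [← nhdsSet_diagonal_eq_uniformity]
      have hopen : IsOpen ((C ×ˢ C) ∪ (Cᶜ ×ˢ Cᶜ) : Set (A × A)) :=
        (hCcl.2.prod hCcl.2).union (hCcl.1.isOpen_compl.prod hCcl.1.isOpen_compl)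
      rw [hopen.mem_nhdsSet]
      rintro ⟨a, b⟩ (rfl : a = b)
      by_cases h : a ∈ C
      · exact Or.inl ⟨h, h⟩
      · exact Or.inr ⟨h, h⟩
    have hVCiff : ∀ {u v : A}, (u, v) ∈ ((C ×ˢ C) ∪ (Cᶜ ×ˢ Cᶜ) : Set (A × A)) → (u ∈ C ↔ v ∈ C) := by
      rintro u v (⟨h1, h2⟩ | ⟨h1, h2⟩)
      · exact iff_of_true h1 h2
      · exact iff_of_false h1 h2
    have hW : {fg : C(A, A) × C(A, A) | ∀ z : A, (fg.1 z, fg.2 z) ∈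
        ((C ×ˢ C) ∪ (Cᶜ ×ˢ Cᶜ) : Set (A × A))} ∈ 𝓤 C(A, A) :=
      ContinuousMap.hasBasis_compactConvergenceUniformity_of_compact.mem_of_mem hVC
    obtain ⟨D, hDfin, hDcov⟩ := hK'cpt.totallyBounded _ hW
    haveI : Finite ↥D := hDfin.to_subtype
    -- profile map
    set P : A → (↥D → Bool) := fun a d => decide ((d : C(A, A)) a ∈ C) with hP
    have hPr : ∀ {a b}, P a = P b → r a b := by
      intro a b hab g hg
      have := hDcov hg
      simp only [Set.mem_iUnion] at this
      obtain ⟨d, hdD, hgd⟩ := this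
      have h1 := hVCiff (hgd a)
      have h2 := hVCiff (hgd b)
      have h3 : ((d : C(A, A)) a ∈ C) ↔ ((d : C(A, A)) b ∈ C) := by
        have := congrFun hab ⟨d, hdD⟩
        simpa [hP] using this
      rw [h1, h3, ← h2]
    have hPopen : ∀ a : A, IsOpen {b | P b = P a} := by
      intro a
      have : {b | P b = P a} = ⋂ d : ↥D, {b | decide ((d : C(A, A)) b ∈ C)
          = decide ((d : C(A, A)) a ∈ C)} := by
        ext b; simp [hP, funext_iff]
      rw [this]
      refine isOpen_iInter_of_finite fun d => ?_
      by_cases h : (d : C(A, A)) a ∈ C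
      · have : {b | decide ((d : C(A, A)) b ∈ C) = decide ((d : C(A, A)) a ∈ C)}
            = (d : C(A, A)) ⁻¹' C := by ext b; simp [h]
        rw [this]; exact hCcl.2.preimage (d : C(A, A)).continuous
      · have : {b | decide ((d : C(A, A)) b ∈ C) = decide ((d : C(A, A)) a ∈ C)}
            = (d : C(A, A)) ⁻¹' Cᶜ := by ext b; simp [h]
        rw [this]; exact hCcl.1.isOpen_compl.preimage (d : C(A, A)).continuous
    -- classes of r are open
    have hclass_open : ∀ a : A, IsOpen {b | r b a} := by
      intro a
      have : {b | r b a} = ⋃ (a' : A) (_ : r a' a), {b | P b = P a'} := by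
        ext b
        simp only [Set.mem_iUnion, Set.mem_setOf_eq]
        constructor
        · intro hb; exact ⟨b, hb, rfl⟩
        · rintro ⟨a', ha', hb⟩; exact hrtrans (hPr hb) ha'
      rw [this]
      exact isOpen_iUnion fun a' => isOpen_iUnion fun _ => hPopen a'
    -- the quotient algebra
    set B := Quotient sr with hB
    set q : A → B := Quotient.mk sr with hq
    have hq_eq : ∀ {a b : A}, q a = q b ↔ r a b := fun {a b} => Quotient.eq
    haveI : Finite B := by
      refine Finite.of_surjective (fun p : ↥D → Bool =>
        if h : ∃ a, P a = p then q h.choose else q x) fun b => ?_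
      obtain ⟨a, rfl⟩ := Quotient.exists_rep b
      have h : ∃ a', P a' = P a := ⟨a, rfl⟩
      refine ⟨P a, ?_⟩
      show (if h : ∃ a', P a' = P a then q h.choose else q x) = q a
      rw [dif_pos h]
      exact hq_eq.mpr (hPr h.choose_spec)
    have hqcont : Continuous q := continuous_quotient_mk'
    haveI : DiscreteTopology B := by
      rw [discreteTopology_iff_isOpen_singleton]
      intro b
      obtain ⟨a, rfl⟩ := Quotient.exists_rep b
      rw [← isQuotientMap_quotient_mk'.isOpen_preimage]
      have : Quotient.mk' ⁻¹' {Quotient.mk sr a} = {b | r b a} := by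
        ext b'; simp only [Set.mem_preimage, Set.mem_singleton_iff, Set.mem_setOf_eq]
        exact hq_eq
      rw [this]
      exact hclass_open a
    -- single coordinate congruence
    have hupd : ∀ (n : ℕ) (ω : Ω n) (v : Fin n → A) (i : Fin n) {c c' : A}, r c c' →
        r (E n ω (Function.update v i c)) (E n ω (Function.update v i c')) := by
      intro n ω v i c c' hcc g hg
      have ht : IsTranslation E (fun z => E n ω (Function.update v i z)) := ⟨n, ω, i, v, rfl⟩
      have htm : InTransMonoid E (fun z => E n ω (Function.update v i z)) :=
        InTransMonoid.id.comp_translation ht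
      exact hcc (g.comp ⟨_, ht.continuous' hE⟩) (hstab _ htm g hg)
    -- full congruence
    have hcong : ∀ (n : ℕ) (ω : Ω n) (a a' : Fin n → A), (∀ i, r (a i) (a' i)) →
        r (E n ω a) (E n ω a') := by
      intro n ω a a' h
      have main : ∀ s : Finset (Fin n), ∀ a : Fin n → A, (∀ i, r (a i) (a' i)) →
          (∀ i ∉ s, a i = a' i) → r (E n ω a) (E n ω a') := by
        intro s
        induction s using Finset.induction_on with
        | empty =>
          intro a _ h0
          have : a = a' := funext fun i => h0 i (Finset.notMem_empty i)
          rw [this]; exact hrrefl _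
        | @insert i s hnotmem ih =>
          intro a hrr hout
          have h1 : r (E n ω a) (E n ω (Function.update a i (a' i))) := by
            have := hupd n ω a i (hrr i)
            rwa [Function.update_eq_self] at this
          have h2 : r (E n ω (Function.update a i (a' i))) (E n ω a') := by
            refine ih _ (fun j => ?_) (fun j hj => ?_)
            · rcases eq_or_ne j i with rfl | hne
              · rw [Function.update_self]; exact hrrefl _
              · rw [Function.update_of_ne hne]; exact hrr j
            · rcases eq_or_ne j i with rfl | hne
              · rw [Function.update_self]
              · rw [Function.update_of_ne hne]
                exact hout j (by simp [hne, hj])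
          exact hrtrans h1 h2
      exact main Finset.univ a h (fun i hi => absurd (Finset.mem_univ i) hi)
    -- operations on the quotient
    set op : ∀ n, Ω n → (Fin n → B) → B :=
      fun n ω b => q (E n ω fun i => (b i).out) with hop
    have hhom : ∀ (n : ℕ) (ω : Ω n) (a : Fin n → A),
        q (E n ω a) = op n ω fun i => q (a i) := by
      intro n ω a
      refine hq_eq.mpr (hcong n ω _ _ fun i => ?_)
      exact hrsymm (Quotient.exact (Quotient.out_eq (q (a i))))
    have hcontOp : ∀ n, Continuous fun p : Ω n × (Fin n → B) => op n p.1 p.2 := by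
      intro n
      refine continuous_of_discrete_snd fun b => ?_
      have h1 : Continuous fun ω : Ω n => ((ω, fun i => (b i).out) : Ω n × (Fin n → A)) :=
        continuous_id.prodMk continuous_const
      have h2 : Continuous fun ω : Ω n => E n ω fun i => (b i).out := (hE n).comp h1
      exact hqcont.comp h2
    refine ⟨⟨B, op, hcontOp, q, hqcont, hhom⟩, ?_⟩
    show q x ≠ q y
    intro hxyq
    have hrxy : r x y := hq_eq.mp hxyq
    have := hrxy (ContinuousMap.id A) hid
    simp only [ContinuousMap.id_apply] at this
    exact hyC (this.mp hxC)
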